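/- The partition distance D satisfies the triangle inequality: D(P,P'') ≤ D(P,P') + D(P',P'') for all partitions P, P', P'' of a finite set V. -/

import Mathlib

/-- The minimum number of vertices to delete so that two partitions (given as setoids)
induce the same partition on the remaining vertices. -/
noncomputable def nD {V : Type*} [Fintype V] [DecidableEq V] (P P' : Setoid V) : ℕ :=
  sInf {k | ∃ S : Finset V, S.card = k ∧
    ∀ x y : V, x ∉ S → y ∉ S → (P.r x y ↔ P'.r x y)}

/-- The normalized partition distance `D(P,P') = n_D(P,P')/n`. -/
noncomputable def partDist {V : Type*} [Fintype V] [DecidableEq V] (P P' : Setoid V) : ℝ :=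
  (nD P P' : ℝ) / (Fintype.card V : ℝ)

lemma nD_set_nonempty {V : Type*} [Fintype V] [DecidableEq V] (P P' : Setoid V) :
    {k | ∃ S : Finset V, S.card = k ∧
      ∀ x y : V, x ∉ S → y ∉ S → (P.r x y ↔ P'.r x y)}.Nonempty :=
  ⟨(Finset.univ : Finset V).card, Finset.univ, rfl,
    fun x _ hx _ => absurd (Finset.mem_univ x) hx⟩

lemma nD_triangle {V : Type*} [Fintype V] [DecidableEq V] (P P' P'' : Setoid V) :
    nD P P'' ≤ nD P P' + nD P' P'' := by
  obtain ⟨S, hS, h⟩ := Nat.sInf_mem (nD_set_nonempty P P')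
  obtain ⟨S', hS', h'⟩ := Nat.sInf_mem (nD_set_nonempty P' P'')
  have : nD P P'' ≤ (S ∪ S').card := by
    apply Nat.sInf_le
    exact ⟨S ∪ S', rfl, fun x y hx hy => by
      simp only [Finset.mem_union, not_or] at hx hy
      exact (h x y hx.1 hy.1).trans (h' x y hx.2 hy.2)⟩
  calc nD P P'' ≤ (S ∪ S').card := this
    _ ≤ S.card + S'.card := Finset.card_union_le _ _
    _ = nD P P' + nD P' P'' := by rw [hS, hS']; rfl

/-- the partition distance satisfies the triangle inequality. -/
theorem partDist_triangle {V : Type*} [Fintype V] [DecidableEq V]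
    (hV : 1 ≤ Fintype.card V) (P P' P'' : Setoid V) :
    partDist P P'' ≤ partDist P P' + partDist P' P'' := by
  have hn : (0:ℝ) < (Fintype.card V : ℝ) := by exact_mod_cast hV
  unfold partDist
  rw [← add_div, div_le_div_iff_of_pos_right hn]
  exact_mod_cast nD_triangle P P' P''
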